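/- Let E be a finite set and R an equivalence relation on 2^E. Then R is the cospanning relation of a matroid on E (i.e., there exists a greedoid (E, F) whose family F is hereditary — Y ⊆ X ∈ F implies Y ∈ F — with rank closure operator σ such that (X, Y) ∈ R iff σ(X) = σ(Y)) if and only if R satisfies, for all X, Y, Z ⊆ E and distinct x, y ∉ X: (R1) (X, Y) ∈ R implies (X, X ∪ Y) ∈ R; (R2) X ⊆ Y ⊆ Z and (X, Z) ∈ R imply (X, Y) ∈ R; (R4) if (X ∪ {y}, X ∪ {x, y}) ∈ R but (X ∪ {x}, X ∪ {x, y}) ∉ R, then there exists z ∈ X ∪ {x} with (X ∪ {x} \ {z}, X ∪ {x}) ∈ R; and (R5) if (X, X \ {x}) ∉ R for every x ∈ X, then (X \ {x} \ {z}, X \ {x}) ∉ R for every x ∈ X and every z ∈ X \ {x}. -/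

import Mathlib

/-- A greedoid on `E`: `∅` is feasible and larger feasible sets augment smaller ones. -/
def IsGreedoid {E : Type*} (F : Set (Set E)) : Prop :=
  ∅ ∈ F ∧ ∀ X ∈ F, ∀ Y ∈ F, Y.ncard < X.ncard → ∃ x ∈ X \ Y, insert x Y ∈ F

/-- The rank function of a set system: `r X = max {|A| : A ⊆ X, A ∈ F}`. -/
noncomputable def greedoidRank {E : Type*} (F : Set (Set E)) (X : Set E) : ℕ :=
  sSup {n | ∃ A ∈ F, A ⊆ X ∧ A.ncard = n}

/-- The rank closure operator `σ X = {x : r (X ∪ {x}) = r X}`. -/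
noncomputable def rankClosure {E : Type*} (F : Set (Set E)) (X : Set E) : Set E :=
  {x | greedoidRank F (insert x X) = greedoidRank F X}

open Set

section RankLemmas

variable {E : Type*} [Fintype E] {F : Set (Set E)}

private lemma rankSet_bdd (X : Set E) : BddAbove {n | ∃ A ∈ F, A ⊆ X ∧ A.ncard = n} := by
  refine ⟨Fintype.card E, ?_⟩
  rintro n ⟨A, -, -, rfl⟩
  calc A.ncard ≤ (univ : Set E).ncard := ncard_le_ncard (subset_univ A) finite_univ
    _ = Fintype.card E := by rw [ncard_univ, Nat.card_eq_fintype_card]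

private lemma rankSet_nonempty (hF : IsGreedoid F) (X : Set E) :
    {n | ∃ A ∈ F, A ⊆ X ∧ A.ncard = n}.Nonempty :=
  ⟨0, ∅, hF.1, empty_subset X, ncard_empty E⟩

lemma rank_exists (hF : IsGreedoid F) (X : Set E) :
    ∃ A ∈ F, A ⊆ X ∧ A.ncard = greedoidRank F X :=
  Nat.sSup_mem (rankSet_nonempty hF X) (rankSet_bdd X)

lemma le_rank {A X : Set E} (hA : A ∈ F) (hAX : A ⊆ X) : A.ncard ≤ greedoidRank F X :=
  le_csSup (rankSet_bdd X) ⟨A, hA, hAX, rfl⟩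

lemma rank_mono (hF : IsGreedoid F) {X Y : Set E} (h : X ⊆ Y) :
    greedoidRank F X ≤ greedoidRank F Y := by
  refine csSup_le (rankSet_nonempty hF X) ?_
  rintro n ⟨A, hA, hAX, rfl⟩
  exact le_rank hA (hAX.trans h)

lemma rank_le_ncard (hF : IsGreedoid F) (X : Set E) : greedoidRank F X ≤ X.ncard := by
  obtain ⟨A, -, hAX, hcard⟩ := rank_exists hF X
  rw [← hcard]
  exact ncard_le_ncard hAX (toFinite X)

lemma rank_of_feasible (hF : IsGreedoid F) {X : Set E} (hX : X ∈ F) :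
    greedoidRank F X = X.ncard :=
  le_antisymm (rank_le_ncard hF X) (le_rank hX subset_rfl)

lemma rank_eq_of_max (hF : IsGreedoid F) {A X : Set E} (hA : A ∈ F) (hAX : A ⊆ X)
    (hmax : ∀ e ∈ X, insert e A ∈ F → e ∈ A) : greedoidRank F X = A.ncard := by
  refine le_antisymm ?_ (le_rank hA hAX)
  obtain ⟨B, hB, hBX, hBcard⟩ := rank_exists hF X
  rw [← hBcard]
  by_contra h
  push_neg at h
  obtain ⟨x, hx, hxA⟩ := hF.2 B hB A hA h
  exact hx.2 (hmax x (hBX hx.1) hxA)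

variable (hF : IsGreedoid F) (hHer : ∀ X Y : Set E, Y ⊆ X → X ∈ F → Y ∈ F)
include hF hHer

lemma rank_insert_key {X X' : Set E} {y : E} (hXX' : X ⊆ X')
    (hr : greedoidRank F X' = greedoidRank F X)
    (hy : greedoidRank F (insert y X) = greedoidRank F X) :
    greedoidRank F (insert y X') = greedoidRank F X := by
  by_contra hne
  have hle : greedoidRank F X ≤ greedoidRank F (insert y X') := by
    rw [← hr]; exact rank_mono hF (subset_insert y X')
  have hlt : greedoidRank F X + 1 ≤ greedoidRank F (insert y X') := by omega
  obtain ⟨B0, hB0, hB0X, hB0card⟩ := rank_exists hF (insert y X')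
  obtain ⟨B, hBsub, hBcard⟩ := Set.exists_subset_card_eq (n := greedoidRank F X + 1)
    (by rw [hB0card]; exact hlt)
  have hB : B ∈ F := hHer _ _ hBsub hB0
  have hBX : B ⊆ insert y X' := hBsub.trans hB0X
  obtain ⟨A, hA, hAX, hAcard⟩ := rank_exists hF X
  obtain ⟨a, ha, haA⟩ := hF.2 B hB A hA (by omega)
  rcases hBX ha.1 with rfl | haX'
  · have : (insert a A).ncard ≤ greedoidRank F (insert a X) :=
      le_rank haA (insert_subset_insert hAX)
    rw [ncard_insert_of_notMem ha.2, hAcard, hy] at this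
    omega
  · have : (insert a A).ncard ≤ greedoidRank F X' :=
      le_rank haA (insert_subset haX' (hAX.trans hXX'))
    rw [ncard_insert_of_notMem ha.2, hAcard, hr] at this
    omega

lemma rank_insert_le (X : Set E) (e : E) :
    greedoidRank F (insert e X) ≤ greedoidRank F X + 1 := by
  obtain ⟨B, hB, hBX, hBcard⟩ := rank_exists hF (insert e X)
  have h1 : B \ {e} ∈ F := hHer _ _ diff_subset hB
  have h2 : B \ {e} ⊆ X := by
    rintro a ⟨haB, hae⟩
    rcases hBX haB with rfl | h
    · exact absurd rfl hae
    · exact h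
  have h3 : (B \ {e}).ncard ≤ greedoidRank F X := le_rank h1 h2
  by_cases he : e ∈ B
  · have := ncard_diff_singleton_add_one he (toFinite B)
    omega
  · rw [diff_singleton_eq_self he] at h3
    omega

lemma rank_union_eq {X Y : Set E}
    (h : ∀ y ∈ Y, greedoidRank F (insert y X) = greedoidRank F X) :
    greedoidRank F (X ∪ Y) = greedoidRank F X := by
  have key : ∀ Y : Set E, Y.Finite →
      (∀ y ∈ Y, greedoidRank F (insert y X) = greedoidRank F X) →
      greedoidRank F (X ∪ Y) = greedoidRank F X := by
    intro Y hYfin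
    refine Set.Finite.induction_on
      (motive := fun Y _ => (∀ y ∈ Y, greedoidRank F (insert y X) = greedoidRank F X) →
        greedoidRank F (X ∪ Y) = greedoidRank F X) Y hYfin (fun _ => by rw [union_empty]) ?_
    intro a s ha hs IH hy
    rw [union_insert]
    have hIH : greedoidRank F (X ∪ s) = greedoidRank F X :=
      IH fun y hys => hy y (mem_insert_of_mem a hys)
    exact rank_insert_key hF hHer subset_union_left hIH (hy a (mem_insert a s))
  exact key Y (toFinite Y) h

lemma closure_union_eq {X Y : Set E} (h : greedoidRank F (X ∪ Y) = greedoidRank F X) :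
    rankClosure F (X ∪ Y) = rankClosure F X := by
  ext w
  simp only [rankClosure, mem_setOf_eq, h]
  constructor
  · intro hw
    have h1 : greedoidRank F (insert w X) ≤ greedoidRank F (insert w (X ∪ Y)) :=
      rank_mono hF (insert_subset_insert subset_union_left)
    have h2 : greedoidRank F X ≤ greedoidRank F (insert w X) :=
      rank_mono hF (subset_insert w X)
    omega
  · intro hw
    rw [rank_insert_key hF hHer subset_union_left h hw]

lemma closure_insert_eq {X : Set E} {x : E} (h : greedoidRank F (insert x X) = greedoidRank F X) :
    rankClosure F (insert x X) = rankClosure F X := by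
  have := closure_union_eq hF hHer (X := X) (Y := {x}) (by rwa [union_singleton])
  rwa [union_singleton] at this

end RankLemmas


/-- The family of sets having no removable element under `R`: the candidate matroid. -/
def coF {E : Type*} (R : Set E → Set E → Prop) : Set (Set E) :=
  {S | ∀ x ∈ S, ¬ R S (S \ {x})}

section Backward

variable {E : Type*} [Fintype E] {R : Set E → Set E → Prop}
variable (hR : Equivalence R)
variable (h1 : ∀ X Y : Set E, R X Y → R X (X ∪ Y))
variable (h2 : ∀ X Y Z : Set E, X ⊆ Y → Y ⊆ Z → R X Z → R X Y)
variable (h4 : ∀ (X : Set E) (x y : E), x ≠ y → x ∉ X → y ∉ X →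
  R (insert y X) (insert x (insert y X)) → ¬ R (insert x X) (insert x (insert y X)) →
  ∃ z ∈ insert x X, R ((insert x X) \ {z}) (insert x X))
variable (h5 : ∀ X : Set E, (∀ x ∈ X, ¬ R X (X \ {x})) →
  ∀ x ∈ X, ∀ z ∈ X \ {x}, ¬ R ((X \ {x}) \ {z}) (X \ {x}))

set_option linter.unusedSectionVars false

include hR h1 h2 h4 h5

lemma coF_diff {S : Set E} (hS : S ∈ coF R) (x : E) : S \ {x} ∈ coF R := by
  by_cases hx : x ∈ S
  · intro z hzS hcon
    exact h5 S hS x hx z hzS (hR.symm hcon)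
  · rwa [diff_singleton_eq_self hx]

lemma coF_hered {S T : Set E} (hS : S ∈ coF R) (hTS : T ⊆ S) : T ∈ coF R := by
  have key : ∀ n (S T : Set E), (S \ T).ncard ≤ n → T ⊆ S → S ∈ coF R → T ∈ coF R := by
    intro n
    induction n with
    | zero =>
      intro S T hc hsub hS
      have he : S \ T = ∅ := (ncard_eq_zero (toFinite _)).1 (Nat.le_zero.1 hc)
      rwa [← (diff_eq_empty.1 he).antisymm hsub]
    | succ n IH =>
      intro S T hc hsub hS
      by_cases hST : S ⊆ T
      · rwa [← hST.antisymm hsub]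
      · obtain ⟨x, hxS, hxT⟩ := not_subset.1 hST
        have hT' : T ⊆ S \ {x} :=
          fun a ha => ⟨hsub ha, fun h => hxT (mem_singleton_iff.1 h ▸ ha)⟩
        have hSx : S \ {x} ∈ coF R := coF_diff hR h1 h2 h4 h5 hS x
        have hcard : ((S \ {x}) \ T).ncard ≤ n := by
          have hEq : (S \ {x}) \ T = (S \ T) \ {x} := by
            ext a; simp only [mem_diff]; tauto
          have hxd : x ∈ S \ T := ⟨hxS, hxT⟩
          have := ncard_diff_singleton_add_one hxd (toFinite _)
          rw [hEq]; omega
        exact IH (S \ {x}) T hcard hT' hSx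
  exact key _ S T le_rfl hTS hS

lemma span_insert_mono {X X' : Set E} {y : E} (hXy : R X (insert y X)) (hXX' : R X X')
    (hsub : X ⊆ X') : R X (insert y X') := by
  have t1 : R (insert y X) X' := hR.trans (hR.symm hXy) hXX'
  have t2 : R (insert y X) ((insert y X) ∪ X') := h1 _ _ t1
  have he : (insert y X) ∪ X' = insert y X' := by
    rw [insert_union, union_eq_self_of_subset_left hsub]
  rw [he] at t2
  exact hR.trans hXy t2

lemma span_union {X Y : Set E} (hY : ∀ y ∈ Y, R X (insert y X)) : R X (X ∪ Y) := by
  have key : ∀ Y : Set E, Y.Finite → (∀ y ∈ Y, R X (insert y X)) → R X (X ∪ Y) := by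
    intro Y hYfin
    refine Set.Finite.induction_on (motive := fun Y _ => (∀ y ∈ Y, R X (insert y X)) → R X (X ∪ Y))
      Y hYfin (fun _ => by rw [union_empty]; exact hR.refl X) ?_
    intro a s ha hs IH hy
    rw [union_insert]
    exact span_insert_mono hR h1 h2 h4 h5 (hy a (mem_insert a s))
      (IH fun y hys => hy y (mem_insert_of_mem a hys)) subset_union_left
  exact key Y (toFinite Y) hY

lemma insert_mem_or_span {A : Set E} {e : E} (hA : A ∈ coF R) (he : e ∉ A) :
    insert e A ∈ coF R ∨ R A (insert e A) := by
  by_cases hcF : insert e A ∈ coF R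
  · exact Or.inl hcF
  right
  simp only [coF, mem_setOf_eq] at hcF
  push_neg at hcF
  obtain ⟨z, hz, hRz⟩ := hcF
  rcases mem_insert_iff.1 hz with rfl | hzA
  · rw [insert_diff_self_of_notMem he] at hRz
    exact hR.symm hRz
  · by_cases hAe : R A (insert e A)
    · exact hAe
    exfalso
    have hze : z ≠ e := fun h => he (h ▸ hzA)
    have e1 : insert e (A \ {z}) = (insert e A) \ {z} :=
      insert_diff_singleton_comm hze.symm A
    have e2 : insert z (insert e (A \ {z})) = insert e A := by
      rw [insert_comm, insert_diff_singleton, insert_eq_of_mem hzA]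
    have e3 : insert z (A \ {z}) = A := by
      rw [insert_diff_singleton, insert_eq_of_mem hzA]
    have key := h4 (A \ {z}) z e hze (fun h => h.2 rfl) (fun h => he h.1)
    rw [e2, e3] at key
    have hyp1 : R (insert e (A \ {z})) (insert e A) := by
      rw [e1]; exact hR.symm hRz
    obtain ⟨w, hw, hRw⟩ := key hyp1 hAe
    exact hA w hw (hR.symm hRw)

lemma not_span_of_insert_mem {A : Set E} {e : E} (he : e ∉ A) (hins : insert e A ∈ coF R) :
    ¬ R A (insert e A) := by
  intro hc
  refine hins e (mem_insert e A) ?_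
  rw [insert_diff_self_of_notMem he]
  exact hR.symm hc

lemma span_exchange {C : Set E} {x y : E} (hC : C ∈ coF R) (hx : x ∈ C) (hy : y ∉ C)
    (hyp : R (insert y (C \ {x})) (insert y C)) : R C (insert y C) := by
  by_contra hc
  have hxy : x ≠ y := fun h => hy (h ▸ hx)
  have e2 : insert x (insert y (C \ {x})) = insert y C := by
    rw [insert_comm, insert_diff_singleton, insert_eq_of_mem hx]
  have e3 : insert x (C \ {x}) = C := by
    rw [insert_diff_singleton, insert_eq_of_mem hx]
  have key := h4 (C \ {x}) x y hxy (fun h => h.2 rfl) (fun h => hy h.1)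
  rw [e2, e3] at key
  obtain ⟨w, hw, hRw⟩ := key hyp hc
  exact hC w hw (hR.symm hRw)

lemma span_congr {X Y : Set E} {e : E} (hXY : R X Y) (hXe : R X (insert e X)) :
    R Y (insert e Y) := by
  have hXU : R X (X ∪ Y) := h1 _ _ hXY
  have hYU : R Y (X ∪ Y) := by
    have := h1 _ _ (hR.symm hXY)
    rwa [union_comm] at this
  have hU : R X (insert e (X ∪ Y)) :=
    span_insert_mono hR h1 h2 h4 h5 hXe hXU subset_union_left
  have hYe : R Y (insert e (X ∪ Y)) := hR.trans hYU (hR.trans (hR.symm hXU) hU)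
  exact h2 Y (insert e Y) (insert e (X ∪ Y)) (subset_insert e Y)
    (insert_subset_insert subset_union_right) hYe

lemma star_aux : ∀ n : ℕ, ∀ A B : Set E, (A ∪ B).ncard ≤ n → A ∈ coF R → B ∈ coF R →
    B.ncard = A.ncard + 1 → R A (A ∪ B) → False := by
  intro n
  induction n with
  | zero =>
    intro A B hn hA hB hcard hspan
    have : B.ncard ≤ (A ∪ B).ncard := ncard_le_ncard subset_union_right (toFinite _)
    omega
  | succ n IH =>
    intro A B hn hA hB hcard hspan
    have hBA : (B \ A).Nonempty := by
      rw [nonempty_iff_ne_empty]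
      intro hemp
      have hsub : B ⊆ A := diff_eq_empty.1 hemp
      have := ncard_le_ncard hsub (toFinite A)
      omega
    obtain ⟨b0, hb0⟩ := hBA
    by_cases hAB : A ⊆ B
    · have hBeq : insert b0 A = B := by
        refine eq_of_subset_of_ncard_le (insert_subset hb0.1 hAB) ?_ (toFinite B)
        rw [ncard_insert_of_notMem hb0.2 (toFinite A)]
        omega
      have hRAB : R A B := by
        have := hspan
        rwa [union_eq_self_of_subset_left hAB] at this
      refine hB b0 hb0.1 ?_
      have hBd : B \ {b0} = A := by rw [← hBeq, insert_diff_self_of_notMem hb0.2]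
      rw [hBd]
      exact hR.symm hRAB
    · obtain ⟨a, haA, haB⟩ := not_subset.1 hAB
      have hins : ∀ b ∈ B, R A (insert b A) := by
        intro b hb
        exact h2 A (insert b A) (A ∪ B) (subset_insert b A)
          (insert_subset (mem_union_right A hb) subset_union_left) hspan
      by_cases hcase : ∃ a' ∈ A, a' ∉ B ∧ ∃ b ∈ B, b ∉ A ∧ insert b (A \ {a'}) ∈ coF R
      · obtain ⟨a', ha'A, ha'B, b, hbB, hbA, hA''⟩ := hcase
        set A'' := insert b (A \ {a'}) with hA''def
        have hba' : b ≠ a' := fun h => hbA (h ▸ ha'A)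
        have ha'nA'' : a' ∉ A'' := by
          intro h
          rcases mem_insert_iff.1 h with h | h
          · exact hba' h.symm
          · exact h.2 rfl
        have e2 : insert a' A'' = insert b A := by
          rw [hA''def, insert_comm, insert_diff_singleton, insert_eq_of_mem ha'A]
        have e4 : A'' \ {b} = A \ {a'} := by
          rw [hA''def, insert_diff_self_of_notMem (fun h => hbA h.1)]
        have e5 : insert a' (A \ {a'}) = A := by
          rw [insert_diff_singleton, insert_eq_of_mem ha'A]
        have hexch : R A'' (insert a' A'') := by
          refine span_exchange hR h1 h2 h4 h5 hA'' (mem_insert b _) ha'nA'' ?_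
          rw [e4, e2, e5]
          exact hins b hbB
        rw [e2] at hexch
        have hAA'' : R A A'' := hR.trans (hins b hbB) (hR.symm hexch)
        have hsub'' : A'' ⊆ A ∪ B :=
          insert_subset (mem_union_right A hbB) (diff_subset.trans subset_union_left)
        have hspan'' : R A'' (A'' ∪ B) := by
          have hU : R A'' (A ∪ B) := hR.trans (hR.symm hAA'') hspan
          exact h2 A'' (A'' ∪ B) (A ∪ B) subset_union_left
            (union_subset hsub'' subset_union_right) hU
        have hcard'' : A''.ncard = A.ncard := by
          rw [hA''def, ncard_insert_of_notMem (fun h => hbA h.1) (toFinite _)]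
          have := ncard_diff_singleton_add_one ha'A (toFinite A)
          omega
        have hsize : (A'' ∪ B).ncard ≤ n := by
          have hsubU : A'' ∪ B ⊆ A ∪ B := union_subset hsub'' subset_union_right
          have hneU : A'' ∪ B ≠ A ∪ B := by
            intro h
            have ha2 : a' ∈ A'' ∪ B := by rw [h]; exact mem_union_left B ha'A
            rcases ha2 with h' | h'
            · exact ha'nA'' h'
            · exact ha'B h'
          have hlt := ncard_lt_ncard (hsubU.ssubset_of_ne hneU) (toFinite _)
          omega
        exact IH A'' B hsize hA'' hB (by omega) hspan''
      · push_neg at hcase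
        have hAa : A \ {a} ∈ coF R := coF_hered hR h1 h2 h4 h5 hA diff_subset
        have hbspan : ∀ b ∈ B, R (A \ {a}) (insert b (A \ {a})) := by
          intro b hb
          by_cases hbmem : b ∈ A \ {a}
          · rw [insert_eq_of_mem hbmem]; exact hR.refl _
          · have hbA : b ∉ A := by
              intro hbA
              refine hbmem ⟨hbA, ?_⟩
              intro h
              exact haB (mem_singleton_iff.1 h ▸ hb)
            rcases insert_mem_or_span hR h1 h2 h4 h5 hAa hbmem with h | h
            · exact absurd h (hcase a haA haB b hb hbA)
            · exact h
        have hspan' : R (A \ {a}) ((A \ {a}) ∪ B) := span_union hR h1 h2 h4 h5 hbspan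
        have hB' : B \ {b0} ∈ coF R := coF_hered hR h1 h2 h4 h5 hB diff_subset
        have hc1 := ncard_diff_singleton_add_one haA (toFinite A)
        have hc2 := ncard_diff_singleton_add_one hb0.1 (toFinite B)
        have hspanB' : R (A \ {a}) ((A \ {a}) ∪ (B \ {b0})) :=
          h2 _ _ _ subset_union_left (union_subset_union_right _ diff_subset) hspan'
        have hsize : ((A \ {a}) ∪ (B \ {b0})).ncard ≤ n := by
          have hsubU : (A \ {a}) ∪ (B \ {b0}) ⊆ A ∪ B :=
            union_subset (diff_subset.trans subset_union_left)
              (diff_subset.trans subset_union_right)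
          have hneU : (A \ {a}) ∪ (B \ {b0}) ≠ A ∪ B := by
            intro h
            have ha2 : a ∈ (A \ {a}) ∪ (B \ {b0}) := by rw [h]; exact mem_union_left B haA
            rcases ha2 with h' | h'
            · exact h'.2 rfl
            · exact haB h'.1
          have hlt := ncard_lt_ncard (hsubU.ssubset_of_ne hneU) (toFinite _)
          omega
        exact IH (A \ {a}) (B \ {b0}) hsize hAa hB' (by omega) hspanB'

lemma span_card_le {A B : Set E} (hA : A ∈ coF R) (hB : B ∈ coF R) (hspan : R A (A ∪ B)) :
    B.ncard ≤ A.ncard := by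
  by_contra h
  push_neg at h
  obtain ⟨B', hB'B, hB'card⟩ := Set.exists_subset_card_eq (n := A.ncard + 1) (s := B) (by omega)
  have hB'' : B' ∈ coF R := coF_hered hR h1 h2 h4 h5 hB hB'B
  have hspan' : R A (A ∪ B') :=
    h2 _ _ _ subset_union_left (union_subset_union_right _ hB'B) hspan
  exact star_aux hR h1 h2 h4 h5 _ A B' le_rfl hA hB'' hB'card hspan'

lemma coF_greedoid : IsGreedoid (coF R) := by
  refine ⟨fun x hx => absurd hx (notMem_empty x), ?_⟩
  intro X hX Y hY hlt
  by_contra hcon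
  push_neg at hcon
  have hall : ∀ x ∈ X, R Y (insert x Y) := by
    intro x hx
    by_cases hxY : x ∈ Y
    · rw [insert_eq_of_mem hxY]; exact hR.refl Y
    · rcases insert_mem_or_span hR h1 h2 h4 h5 hY hxY with h | h
      · exact absurd h (hcon x ⟨hx, hxY⟩)
      · exact h
  have := span_card_le hR h1 h2 h4 h5 hY hX (span_union hR h1 h2 h4 h5 hall)
  omega

lemma exists_max_coF (X : Set E) :
    ∃ A, A ∈ coF R ∧ A ⊆ X ∧ ∀ e ∈ X, insert e A ∈ coF R → e ∈ A := by
  have hfin : {A : Set E | A ∈ coF R ∧ A ⊆ X}.Finite := Set.toFinite _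
  have hne : {A : Set E | A ∈ coF R ∧ A ⊆ X}.Nonempty :=
    ⟨∅, fun x hx => absurd hx (notMem_empty x), empty_subset X⟩
  obtain ⟨A, hAS, hmax⟩ := Set.Finite.exists_maximalFor (fun A => A.ncard) _ hfin hne
  refine ⟨A, hAS.1, hAS.2, ?_⟩
  intro e he hins
  by_contra heA
  have hmem : insert e A ∈ {A : Set E | A ∈ coF R ∧ A ⊆ X} := ⟨hins, insert_subset he hAS.2⟩
  have : (insert e A).ncard ≤ A.ncard := hmax hmem (ncard_le_ncard (subset_insert e A) (toFinite _))
  rw [ncard_insert_of_notMem heA (toFinite A)] at this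
  omega

lemma max_spans {A X : Set E} (hA : A ∈ coF R) (hAX : A ⊆ X)
    (hmax : ∀ e ∈ X, insert e A ∈ coF R → e ∈ A) : R A X := by
  have hall : ∀ e ∈ X, R A (insert e A) := by
    intro e he
    by_cases heA : e ∈ A
    · rw [insert_eq_of_mem heA]; exact hR.refl A
    · rcases insert_mem_or_span hR h1 h2 h4 h5 hA heA with h | h
      · exact absurd (hmax e he h) heA
      · exact h
  have := span_union hR h1 h2 h4 h5 hall
  rwa [union_eq_self_of_subset_left hAX] at this

lemma coF_closure_eq (X : Set E) : rankClosure (coF R) X = {e | R X (insert e X)} := by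
  obtain ⟨A, hA, hAX, hmax⟩ := exists_max_coF hR h1 h2 h4 h5 X
  have hAspan : R A X := max_spans hR h1 h2 h4 h5 hA hAX hmax
  have hrX : greedoidRank (coF R) X = A.ncard :=
    rank_eq_of_max (coF_greedoid hR h1 h2 h4 h5) hA hAX hmax
  ext e
  simp only [rankClosure, mem_setOf_eq]
  by_cases heX : e ∈ X
  · rw [insert_eq_of_mem heX]
    simp [hR.refl X]
  · have heA : e ∉ A := fun h => heX (hAX h)
    constructor
    · intro hre
      have hmax' : ∀ w ∈ insert e X, insert w A ∈ coF R → w ∈ A := by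
        intro w hw hins
        rcases mem_insert_iff.1 hw with rfl | hwX
        · exfalso
          have hle : (insert w A).ncard ≤ greedoidRank (coF R) (insert w X) :=
            le_rank hins (insert_subset_insert hAX)
          rw [hre, hrX, ncard_insert_of_notMem heA (toFinite A)] at hle
          omega
        · exact hmax w hwX hins
      have hAspan' : R A (insert e X) :=
        max_spans hR h1 h2 h4 h5 hA (hAX.trans (subset_insert e X)) hmax'
      exact hR.trans (hR.symm hAspan) hAspan'
    · intro hRe
      have hmax' : ∀ w ∈ insert e X, insert w A ∈ coF R → w ∈ A := by
        intro w hw hins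
        rcases mem_insert_iff.1 hw with rfl | hwX
        · exfalso
          have hnospan := not_span_of_insert_mem hR h1 h2 h4 h5 heA hins
          have hsp : R A (insert w A) :=
            h2 A (insert w A) (insert w X) (subset_insert w A)
              (insert_subset_insert hAX) (hR.trans hAspan hRe)
          exact hnospan hsp
        · exact hmax w hwX hins
      rw [hrX]
      exact rank_eq_of_max (coF_greedoid hR h1 h2 h4 h5) hA
        (hAX.trans (subset_insert e X)) hmax'

end Backward

theorem stmt18 {E : Type*} [Fintype E] (R : Set E → Set E → Prop) (hR : Equivalence R) :
    (∃ F : Set (Set E), IsGreedoid F ∧ (∀ X Y : Set E, Y ⊆ X → X ∈ F → Y ∈ F) ∧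
        ∀ X Y : Set E, R X Y ↔ rankClosure F X = rankClosure F Y) ↔
      ((∀ X Y : Set E, R X Y → R X (X ∪ Y)) ∧
       (∀ X Y Z : Set E, X ⊆ Y → Y ⊆ Z → R X Z → R X Y) ∧
       (∀ (X : Set E) (x y : E), x ≠ y → x ∉ X → y ∉ X →
         R (insert y X) (insert x (insert y X)) →
         ¬ R (insert x X) (insert x (insert y X)) →
         ∃ z ∈ insert x X, R ((insert x X) \ {z}) (insert x X)) ∧
       (∀ X : Set E, (∀ x ∈ X, ¬ R X (X \ {x})) →
         ∀ x ∈ X, ∀ z ∈ X \ {x}, ¬ R ((X \ {x}) \ {z}) (X \ {x}))) := by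
  constructor
  · rintro ⟨F, hF, hHer, hRiff⟩
    refine ⟨?_, ?_, ?_, ?_⟩
    · -- R1
      intro X Y hXY
      rw [hRiff] at hXY ⊢
      have hY : ∀ y ∈ Y, greedoidRank F (insert y X) = greedoidRank F X := by
        intro y hy
        have h : y ∈ rankClosure F Y := by
          show greedoidRank F (insert y Y) = _
          rw [insert_eq_of_mem hy]
        rw [← hXY] at h
        exact h
      exact (closure_union_eq hF hHer (rank_union_eq hF hHer hY)).symm
    · -- R2
      intro X Y Z hXY hYZ hXZ
      rw [hRiff] at hXZ ⊢
      have hYr : ∀ y ∈ Y, greedoidRank F (insert y X) = greedoidRank F X := by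
        intro y hy
        have h : y ∈ rankClosure F Z := by
          show greedoidRank F (insert y Z) = _
          rw [insert_eq_of_mem (hYZ hy)]
        rw [← hXZ] at h
        exact h
      have h2 := closure_union_eq hF hHer (rank_union_eq hF hHer hYr)
      rw [union_eq_self_of_subset_left hXY] at h2
      exact h2.symm
    · -- R4
      intro X x y hxy hxX hyX hyp1 hyp2
      rw [hRiff] at hyp1 hyp2
      refine ⟨x, mem_insert x X, ?_⟩
      rw [hRiff]
      have hcomm : insert x (insert y X) = insert y (insert x X) := insert_comm x y X
      have hxx : greedoidRank F (insert x X) = greedoidRank F X := by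
        have hne : greedoidRank F (insert y (insert x X)) ≠ greedoidRank F (insert x X) := by
          intro h
          exact hyp2 (by rw [hcomm]; exact (closure_insert_eq hF hHer h).symm)
        have h1 : greedoidRank F (insert x X) ≤ greedoidRank F (insert y (insert x X)) :=
          rank_mono hF (subset_insert _ _)
        have h2 : greedoidRank F (insert y (insert x X)) ≤ greedoidRank F (insert x X) + 1 :=
          rank_insert_le hF hHer _ _
        have hx2 : greedoidRank F (insert x (insert y X)) = greedoidRank F (insert y X) := by
          have h : x ∈ rankClosure F (insert x (insert y X)) := by
            show greedoidRank F (insert x (insert x (insert y X))) = _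
            rw [insert_idem]
          rw [← hyp1] at h
          exact h
        have h3 : greedoidRank F (insert y X) ≤ greedoidRank F X + 1 :=
          rank_insert_le hF hHer X y
        have h4 : greedoidRank F X ≤ greedoidRank F (insert x X) :=
          rank_mono hF (subset_insert _ _)
        have h5 : greedoidRank F (insert x (insert y X)) =
            greedoidRank F (insert y (insert x X)) := by rw [hcomm]
        omega
      rw [insert_diff_self_of_notMem hxX]
      exact (closure_insert_eq hF hHer hxx).symm
    · -- R5
      intro X hX x hxX z hz
      have hdrop : ∀ w ∈ X, greedoidRank F (X \ {w}) < greedoidRank F X := by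
        intro w hw
        have hne := hX w hw
        rw [hRiff] at hne
        have hle : greedoidRank F (X \ {w}) ≤ greedoidRank F X := rank_mono hF diff_subset
        rcases lt_or_eq_of_le hle with h | h
        · exact h
        · exfalso
          apply hne
          have hr : greedoidRank F (insert w (X \ {w})) = greedoidRank F (X \ {w}) := by
            rw [insert_diff_singleton, insert_eq_of_mem hw, h]
          have hcl := closure_insert_eq hF hHer hr
          rwa [insert_diff_singleton, insert_eq_of_mem hw] at hcl
      have hXF : X ∈ F := by
        obtain ⟨A, hA, hAX, hAcard⟩ := rank_exists hF X
        by_cases hXA : X ⊆ A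
        · rwa [← hXA.antisymm hAX] at hA
        · exfalso
          obtain ⟨w, hwX, hwA⟩ := not_subset.1 hXA
          have hsub : A ⊆ X \ {w} :=
            fun a haA => ⟨hAX haA, fun h => hwA (mem_singleton_iff.1 h ▸ haA)⟩
          have hge : greedoidRank F X ≤ greedoidRank F (X \ {w}) := by
            rw [← hAcard]; exact le_rank hA hsub
          exact absurd hge (not_le.2 (hdrop w hwX))
      intro hcon
      rw [hRiff] at hcon
      have hzS : z ∈ X \ {x} := hz
      have hS : X \ {x} ∈ F := hHer X _ diff_subset hXF
      have hSz : (X \ {x}) \ {z} ∈ F := hHer _ _ diff_subset hS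
      have h1 : greedoidRank F (X \ {x}) = (X \ {x}).ncard := rank_of_feasible hF hS
      have h2 : greedoidRank F ((X \ {x}) \ {z}) = ((X \ {x}) \ {z}).ncard :=
        rank_of_feasible hF hSz
      have h3 : z ∈ rankClosure F (X \ {x}) := by
        show greedoidRank F (insert z (X \ {x})) = _
        rw [insert_eq_of_mem hzS]
      rw [← hcon] at h3
      have h3' : greedoidRank F (insert z ((X \ {x}) \ {z})) =
          greedoidRank F ((X \ {x}) \ {z}) := h3
      have h4 : insert z ((X \ {x}) \ {z}) = X \ {x} := by
        rw [insert_diff_singleton, insert_eq_of_mem hzS]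
      rw [h4] at h3'
      have h5 := ncard_diff_singleton_add_one hzS (toFinite _)
      omega
  · rintro ⟨h1, h2, h4, h5⟩
    refine ⟨coF R, coF_greedoid hR h1 h2 h4 h5,
      fun X Y hYX hX => coF_hered hR h1 h2 h4 h5 hX hYX, ?_⟩
    intro X Y
    rw [coF_closure_eq hR h1 h2 h4 h5 X, coF_closure_eq hR h1 h2 h4 h5 Y]
    constructor
    · intro hXY
      ext e
      simp only [mem_setOf_eq]
      exact ⟨span_congr hR h1 h2 h4 h5 hXY, span_congr hR h1 h2 h4 h5 (hR.symm hXY)⟩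
    · intro h
      have hYs : ∀ y ∈ Y, R X (insert y X) := by
        intro y hy
        have hy' : R Y (insert y Y) := by rw [insert_eq_of_mem hy]; exact hR.refl Y
        have hmem : y ∈ {e | R Y (insert e Y)} := hy'
        rw [← h] at hmem
        exact hmem
      have hXs : ∀ x ∈ X, R Y (insert x Y) := by
        intro x hx
        have hx' : R X (insert x X) := by rw [insert_eq_of_mem hx]; exact hR.refl X
        have hmem : x ∈ {e | R X (insert e X)} := hx'
        rw [h] at hmem
        exact hmem
      have hXU : R X (X ∪ Y) := span_union hR h1 h2 h4 h5 hYs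
      have hYU : R Y (Y ∪ X) := span_union hR h1 h2 h4 h5 hXs
      rw [union_comm] at hYU
      exact hR.trans hXU (hR.symm hYU)
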